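/- For a probability distribution Q on R^d and a point z in R^d, the Tukey halfspace depth of z with respect to Q, defined as the infimum over unit vectors u of P(⟨u,X⟩ ≥ ⟨u,z⟩) for X ~ Q, equals the infimum over all non-null affine linear classifiers f(x) = ⟨w,x⟩ + b (with w ≠ 0) of twice the expected zero-one loss on the labelled distribution P_{Q+|z-} = (1/2)(Q ⊗ δ_{+1}) + (1/2)(δ_z ⊗ δ_{-1}), where the zero-one loss is L(f(x),y) = 1 if y·f(x) < 0 and 0 otherwise. -/

import Mathlib

open MeasureTheory RealInnerProductSpace Filter Topology

/-- Zero-one loss under the prediction convention: a positively labelled point is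
misclassified iff `f x < 0`, and a negatively labelled point iff `f x ≥ 0`. -/
noncomputable def loss01 (t y : ℝ) : ℝ :=
  if (y = 1 ∧ t < 0) ∨ (y = -1 ∧ 0 ≤ t) then 1 else 0

lemma loss01_one (t : ℝ) : loss01 t 1 = if t < 0 then 1 else 0 := by
  norm_num [loss01]

lemma loss01_negone (t : ℝ) : loss01 t (-1) = if 0 ≤ t then 1 else 0 := by
  norm_num [loss01]

lemma loss01_nonneg (t y : ℝ) : 0 ≤ loss01 t y := by
  unfold loss01; split <;> norm_num

/-- The Tukey halfspace depth equals the infimum over non-null affine linear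
classifiers of twice the expected zero-one loss on the labelled distribution
`(1/2)(Q ⊗ δ₊) + (1/2)(δ_z ⊗ δ₋)`. -/
theorem tukey_depth_as_loss (d : ℕ) (hd : 0 < d)
    (Q : Measure (EuclideanSpace ℝ (Fin d))) [IsProbabilityMeasure Q]
    (z : EuclideanSpace ℝ (Fin d)) :
    (⨅ u : {u : EuclideanSpace ℝ (Fin d) // ‖u‖ = 1},
      (Q {x | ⟪u.1, z⟫ ≤ ⟪u.1, x⟫}).toReal)
    = ⨅ p : {p : EuclideanSpace ℝ (Fin d) × ℝ // p.1 ≠ 0},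
        2 * ((1/2) * ∫ x, loss01 (⟪p.1.1, x⟫ + p.1.2) 1 ∂Q
          + (1/2) * loss01 (⟪p.1.1, z⟫ + p.1.2) (-1)) := by
  classical
  have hu0 : ‖(EuclideanSpace.single (⟨0, hd⟩ : Fin d) (1:ℝ))‖ = 1 := by
    simp [EuclideanSpace.norm_single]
  haveI h1 : Nonempty {u : EuclideanSpace ℝ (Fin d) // ‖u‖ = 1} := ⟨⟨_, hu0⟩⟩
  haveI h2 : Nonempty {p : EuclideanSpace ℝ (Fin d) × ℝ // p.1 ≠ 0} :=
    ⟨⟨(EuclideanSpace.single (⟨0, hd⟩ : Fin d) (1:ℝ), 0), by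
      intro h
      rw [show (EuclideanSpace.single (⟨0, hd⟩ : Fin d) (1:ℝ)) = 0 from h] at hu0
      simp at hu0⟩⟩
  -- measurability of the relevant sets
  have hmeas : ∀ (w : EuclideanSpace ℝ (Fin d)) (b : ℝ),
      MeasurableSet {x : EuclideanSpace ℝ (Fin d) | ⟪w, x⟫ + b < 0} := by
    intro w b
    have hc : Continuous fun x : EuclideanSpace ℝ (Fin d) => ⟪w, x⟫ + b :=
      (continuous_const.inner continuous_id).add continuous_const
    exact measurableSet_lt hc.measurable measurable_const
  have hmeas2 : ∀ (u : EuclideanSpace ℝ (Fin d)) (c : ℝ),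
      MeasurableSet {x : EuclideanSpace ℝ (Fin d) | c < ⟪u, x⟫} := by
    intro u c
    have hc : Continuous fun x : EuclideanSpace ℝ (Fin d) => ⟪u, x⟫ :=
      continuous_const.inner continuous_id
    exact measurableSet_lt measurable_const hc.measurable
  -- the integral of the loss on the positive part
  have hint : ∀ (w : EuclideanSpace ℝ (Fin d)) (b : ℝ),
      ∫ x, loss01 (⟪w, x⟫ + b) 1 ∂Q
        = (Q {x | ⟪w, x⟫ + b < 0}).toReal := by
    intro w b
    have heq : (fun x => loss01 (⟪w, x⟫ + b) 1)
        = Set.indicator {x : EuclideanSpace ℝ (Fin d) | ⟪w, x⟫ + b < 0}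
            (fun _ => (1:ℝ)) := by
      ext x
      rw [loss01_one]
      simp [Set.indicator_apply, Set.mem_setOf_eq]
    rw [heq, integral_indicator_const _ (hmeas w b)]
    simp
    rfl
  have hcost : ∀ (w : EuclideanSpace ℝ (Fin d)) (b : ℝ),
      2 * ((1/2) * ∫ x, loss01 (⟪w, x⟫ + b) 1 ∂Q
          + (1/2) * loss01 (⟪w, z⟫ + b) (-1))
        = (Q {x | ⟪w, x⟫ + b < 0}).toReal + loss01 (⟪w, z⟫ + b) (-1) := by
    intro w b
    rw [hint]
    ring
  have hbdd1 : BddBelow (Set.range fun u : {u : EuclideanSpace ℝ (Fin d) // ‖u‖ = 1} =>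
      (Q {x | ⟪u.1, z⟫ ≤ ⟪u.1, x⟫}).toReal) := by
    refine ⟨0, ?_⟩
    rintro r ⟨u, rfl⟩
    exact ENNReal.toReal_nonneg
  have hbdd2 : BddBelow (Set.range fun p : {p : EuclideanSpace ℝ (Fin d) × ℝ // p.1 ≠ 0} =>
      2 * ((1/2) * ∫ x, loss01 (⟪p.1.1, x⟫ + p.1.2) 1 ∂Q
          + (1/2) * loss01 (⟪p.1.1, z⟫ + p.1.2) (-1))) := by
    refine ⟨0, ?_⟩
    rintro r ⟨p, rfl⟩
    dsimp only
    rw [hcost]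
    have := loss01_nonneg (⟪p.1.1, z⟫ + p.1.2) (-1)
    have := ENNReal.toReal_nonneg (a := Q {x | ⟪p.1.1, x⟫ + p.1.2 < 0})
    linarith
  apply le_antisymm
  · -- LHS ≤ each classifier cost
    apply le_ciInf
    rintro ⟨⟨w, b⟩, hw⟩
    simp only
    rw [hcost]
    by_cases hz : ⟪w, z⟫ + b < 0
    · have hL : loss01 (⟪w, z⟫ + b) (-1) = 0 := by
        rw [loss01_negone, if_neg (not_le.mpr hz)]
      rw [hL, add_zero]
      have hwn : (0:ℝ) < ‖w‖ := norm_pos_iff.mpr hw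
      set u : EuclideanSpace ℝ (Fin d) := (-‖w‖⁻¹) • w with hu
      have hun : ‖u‖ = 1 := by
        rw [hu, norm_smul]
        rw [norm_neg, norm_inv, norm_norm]
        exact inv_mul_cancel₀ hwn.ne'
      refine ciInf_le_of_le hbdd1 ⟨u, hun⟩ ?_
      have hsub : {x : EuclideanSpace ℝ (Fin d) | ⟪u, z⟫ ≤ ⟪u, x⟫}
          ⊆ {x | ⟪w, x⟫ + b < 0} := by
        intro x hx
        simp only [Set.mem_setOf_eq, hu, real_inner_smul_left] at hx ⊢
        have hwi : (0:ℝ) < ‖w‖⁻¹ := inv_pos.mpr hwn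
        have hxz : ⟪w, x⟫ ≤ ⟪w, z⟫ := by nlinarith
        linarith
      exact (ENNReal.toReal_le_toReal (measure_ne_top Q _)
        (measure_ne_top Q _)).mpr (measure_mono hsub)
    · have hL : loss01 (⟪w, z⟫ + b) (-1) = 1 := by
        rw [loss01_negone, if_pos (not_lt.mp hz)]
      rw [hL]
      obtain ⟨u⟩ := h1
      refine ciInf_le_of_le hbdd1 u ?_
      have h1le : (Q {x | ⟪u.1, z⟫ ≤ ⟪u.1, x⟫}).toReal ≤ 1 := by
        simpa using ENNReal.toReal_mono ENNReal.one_ne_top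
          (prob_le_one (μ := Q) (s := {x | ⟪u.1, z⟫ ≤ ⟪u.1, x⟫}))
      have := ENNReal.toReal_nonneg (a := Q {x | ⟪w, x⟫ + b < 0})
      linarith
  · -- RHS ≤ each halfspace value, via approximation
    apply le_ciInf
    rintro ⟨u, hun⟩
    simp only
    refine le_of_forall_pos_le_add ?_
    intro ε hε
    -- continuity from above
    have hiInt : (⋂ n : ℕ, {x : EuclideanSpace ℝ (Fin d) |
        ⟪u, z⟫ - 1/(n+1) < ⟪u, x⟫}) = {x | ⟪u, z⟫ ≤ ⟪u, x⟫} := by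
      ext x
      simp only [Set.mem_iInter, Set.mem_setOf_eq]
      constructor
      · intro h
        by_contra hc
        push_neg at hc
        obtain ⟨n, hn⟩ := exists_nat_one_div_lt (sub_pos.mpr hc)
        have := h n
        push_cast at hn this
        linarith
      · intro h n
        have : (0:ℝ) < 1/(n+1) := by positivity
        linarith
    have hanti : Antitone (fun n : ℕ => {x : EuclideanSpace ℝ (Fin d) |
        ⟪u, z⟫ - 1/(n+1) < ⟪u, x⟫}) := by
      intro m n hmn x hx
      simp only [Set.mem_setOf_eq] at hx ⊢
      have h1 : (1:ℝ)/(n+1) ≤ 1/(m+1) := by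
        apply one_div_le_one_div_of_le
        · positivity
        · exact_mod_cast Nat.succ_le_succ hmn
      linarith
    have hτ : Tendsto (fun n : ℕ => Q {x : EuclideanSpace ℝ (Fin d) |
        ⟪u, z⟫ - 1/(n+1) < ⟪u, x⟫}) atTop (𝓝 (Q {x | ⟪u, z⟫ ≤ ⟪u, x⟫})) := by
      rw [← hiInt]
      exact tendsto_measure_iInter_atTop (fun n => (hmeas2 u _).nullMeasurableSet) hanti
        ⟨0, measure_ne_top Q _⟩
    have hτ' : Tendsto (fun n : ℕ => (Q {x : EuclideanSpace ℝ (Fin d) |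
        ⟪u, z⟫ - 1/(n+1) < ⟪u, x⟫}).toReal) atTop
        (𝓝 ((Q {x | ⟪u, z⟫ ≤ ⟪u, x⟫}).toReal)) :=
      (ENNReal.tendsto_toReal (measure_ne_top Q _)).comp hτ
    have hev : ∀ᶠ n : ℕ in atTop, (Q {x : EuclideanSpace ℝ (Fin d) |
        ⟪u, z⟫ - 1/(n+1) < ⟪u, x⟫}).toReal
          < (Q {x | ⟪u, z⟫ ≤ ⟪u, x⟫}).toReal + ε :=
      hτ'.eventually (gt_mem_nhds (lt_add_of_pos_right _ hε))
    obtain ⟨n, hn⟩ := hev.exists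
    -- choose the classifier (-u, ⟪u,z⟫ - 1/(n+1))
    have hune : u ≠ 0 := by
      intro h
      rw [h] at hun
      simp at hun
    have hnu : -u ≠ (0 : EuclideanSpace ℝ (Fin d)) := neg_ne_zero.mpr hune
    refine le_trans (ciInf_le hbdd2 ⟨(-u, ⟪u, z⟫ - 1/(n+1)), hnu⟩) ?_
    simp only
    rw [hcost]
    have hset : {x : EuclideanSpace ℝ (Fin d) | ⟪-u, x⟫ + (⟪u, z⟫ - 1/(n+1)) < 0}
        = {x : EuclideanSpace ℝ (Fin d) | ⟪u, z⟫ - 1/(n+1) < ⟪u, x⟫} := by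
      ext x
      simp only [Set.mem_setOf_eq, inner_neg_left]
      constructor <;> intro h <;> linarith
    have hL : loss01 (⟪-u, z⟫ + (⟪u, z⟫ - 1/(n+1))) (-1) = 0 := by
      rw [loss01_negone, inner_neg_left]
      have h0 : (0:ℝ) < 1/((n:ℝ)+1) := by positivity
      have hlt : -⟪u, z⟫ + (⟪u, z⟫ - 1/((n:ℝ)+1)) < 0 := by linarith
      rw [if_neg (not_le.mpr hlt)]
    rw [hset, hL, add_zero]
    exact hn.le
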